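/- arXiv:0910.1585 — 4 statements merged into one kernel-verified Lean document; each statement's English description precedes it below -/
import Mathlib

section
/- (Fair-Extension Lemma) In a polychromatic decision protocol with a C-chromatic coloring that satisfies Independence of Decisions (IoD), every polychromatic run x can be extended by a fair extension to another polychromatic run; here a fair extension of x is a finite sequence of events e_1,…,e_k such that each e_j is enabled at x·e_1⋯e_{j−1} and every event that is enabled at x and at every intermediate run x·e_1⋯e_j (for 0 ≤ j ≤ k) occurs among e_1,…,e_k. -/
open Classical in
/-- The subsequence of a run consisting of those events whose principal set
meets `Q`. -/
noncomputable def restrictRun {E P : Type*} (prin : E → Set P) (Q : Set P)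
    (x : List E) : List E :=
  x.filter fun e => decide ((prin e ∩ Q).Nonempty)

/-- `y` includes `x`: for every principal `p`, the subsequence of `x` of
events seen by `p` is a prefix of the corresponding subsequence of `y`. -/
def RunIncludes {E P : Type*} (prin : E → Set P) (x y : List E) : Prop :=
  ∀ p : P, restrictRun prin {p} x <+: restrictRun prin {p} y

/-- `x` and `y` are equivalent with respect to the set `Q` of principals:
their subsequences of events whose principal sets meet `Q` coincide. -/
def RunEquiv {E P : Type*} (prin : E → Set P) (Q : Set P)
    (x y : List E) : Prop :=
  restrictRun prin Q x = restrictRun prin Q y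

/-- An asynchronous protocol: a prefix-closed set of runs satisfying property
`P2`.  (Property `P3` — finitely many events are enabled at each run — holds
automatically since the set `E` of events is finite.) -/
structure Protocol (E P : Type*) where
  prin : E → Set P
  prin_nonempty : ∀ e, (prin e).Nonempty
  runs : Set (List E)
  prefix_closed : ∀ x y : List E, x <+: y → y ∈ runs → x ∈ runs
  p2 : ∀ (x y : List E) (e : E), x ++ [e] ∈ runs → y ∈ runs →
    RunIncludes prin x y → RunEquiv prin (prin e) x y → y ++ [e] ∈ runs

/-- An event `e` is enabled at a run `x` if `x·e` is also a run. -/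
def Protocol.Enabled {E P : Type*} (Pr : Protocol E P)
    (x : List E) (e : E) : Prop :=
  x ++ [e] ∈ Pr.runs

/-- A run is monochromatic if its color is a singleton. -/
def Monochromatic {E C : Type*} (col : List E → Set C) (x : List E) : Prop :=
  ∃ c : C, col x = {c}

/-- A run is polychromatic if its color has at least two elements. -/
def Polychromatic {E C : Type*} (col : List E → Set C) (x : List E) : Prop :=
  ∃ c d : C, c ∈ col x ∧ d ∈ col x ∧ c ≠ d

/-- `col` is a `C`-chromatic coloring of the protocol: it satisfies conditions
`C1`, `C2` and `C3`. -/
def IsColoring {E P C : Type*} (Pr : Protocol E P)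
    (col : List E → Set C) : Prop :=
  (∀ c : C, ∃ x ∈ Pr.runs, col x = {c}) ∧
  (∀ x ∈ Pr.runs, ∀ c ∈ col x, ∃ y ∈ Pr.runs, x <+: y ∧ col y = {c}) ∧
  (∀ x ∈ Pr.runs, ∀ y ∈ Pr.runs, RunIncludes Pr.prin x y → col y ⊆ col x)

/-- Independence of Decisions (IoD). -/
def IoD {E P C : Type*} (Pr : Protocol E P) (col : List E → Set C) : Prop :=
  ∀ x ∈ Pr.runs, Polychromatic col x →
    ∀ e : E, Pr.Enabled x e → ∀ c : C, col (x ++ [e]) = {c} →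
      ∀ e' : E, e' ≠ e → Pr.Enabled x e' →
        c ∈ col (x ++ [e']) ∧
        ((x ++ [e']) ++ [e] ∈ Pr.runs →
          ∀ d : C, col ((x ++ [e']) ++ [e]) = {d} → d = c)

/-- The prefix of length `k` of an infinite sequence of events. -/
def prefixList {E : Type*} (π : ℕ → E) (k : ℕ) : List E :=
  List.ofFn fun j : Fin k => π (j : ℕ)

/-- An infinite fair sequence: all finite prefixes are runs and every event
enabled at all but finitely many prefixes occurs infinitely often. -/
def InfFairSeq {E P : Type*} (Pr : Protocol E P) (π : ℕ → E) : Prop :=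
  (∀ k : ℕ, prefixList π k ∈ Pr.runs) ∧
  ∀ e : E, (∃ N : ℕ, ∀ k : ℕ, N ≤ k → Pr.Enabled (prefixList π k) e) →
    ∀ N : ℕ, ∃ k : ℕ, N ≤ k ∧ π k = e

/-- A finite fair sequence: a run at which no event is enabled. -/
def FinFairSeq {E P : Type*} (Pr : Protocol E P) (x : List E) : Prop :=
  x ∈ Pr.runs ∧ ∀ e : E, ¬ Pr.Enabled x e

/-- The decision property `D`: every fair sequence (finite or infinite) has a
monochromatic finite prefix. -/
def DecisionProtocol {E P C : Type*} (Pr : Protocol E P)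
    (col : List E → Set C) : Prop :=
  (∀ x : List E, FinFairSeq Pr x → ∃ p : List E, p <+: x ∧ Monochromatic col p) ∧
  (∀ π : ℕ → E, InfFairSeq Pr π → ∃ k : ℕ, Monochromatic col (prefixList π k))

/-- A fair extension of a run `x`: a finite sequence of events each enabled at
the preceding intermediate run, such that every event enabled at `x` and at
every intermediate run occurs in the extension. -/
def FairExtension {E P : Type*} (Pr : Protocol E P) (x es : List E) : Prop :=
  x ++ es ∈ Pr.runs ∧
  ∀ e : E, (∀ p : List E, p <+: es → Pr.Enabled (x ++ p) e) → e ∈ es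

section FEL

open Classical

variable {E P C : Type*}

lemma prefix_runIncludes {prin : E → Set P} {x y : List E} (h : x <+: y) :
    RunIncludes prin x y := fun _ => h.filter _

lemma col_anti {Pr : Protocol E P} {col : List E → Set C} (hcol : IsColoring Pr col)
    {x y : List E} (hx : x ∈ Pr.runs) (hy : y ∈ Pr.runs) (h : x <+: y) :
    col y ⊆ col x :=
  hcol.2.2 x hx y hy (prefix_runIncludes h)

lemma poly_not_sub_singleton {col : List E → Set C} {x : List E}
    (h : Polychromatic col x) (c : C) (hs : col x ⊆ {c}) : False := by
  obtain ⟨a, b, ha, hb, hab⟩ := h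
  exact hab ((hs ha).trans (hs hb).symm)

/-- the event scheduled by the round-robin scheduler -/
noncomputable def pickEv [Fintype E] (Pr : Protocol E P) (r : List E) (k : ℕ)
    (h : ∃ e, Pr.Enabled r e) : E :=
  if Pr.Enabled r ((Finset.univ : Finset E).toList.getD
      (k % (Finset.univ : Finset E).toList.length) h.choose)
  then (Finset.univ : Finset E).toList.getD
      (k % (Finset.univ : Finset E).toList.length) h.choose
  else h.choose

lemma pickEv_enabled [Fintype E] (Pr : Protocol E P) (r : List E) (k : ℕ)
    (h : ∃ e, Pr.Enabled r e) : Pr.Enabled r (pickEv Pr r k h) := by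
  unfold pickEv
  split
  · assumption
  · exact h.choose_spec

lemma pickEv_eq [Fintype E] (Pr : Protocol E P) (r : List E) (k : ℕ)
    (h : ∃ e, Pr.Enabled r e) (e : E) (he : Pr.Enabled r e)
    (hk : k % (Finset.univ : Finset E).toList.length
        = (Finset.univ : Finset E).toList.idxOf e) :
    pickEv Pr r k h = e := by
  have hmem : e ∈ (Finset.univ : Finset E).toList := by simp
  have hlt : (Finset.univ : Finset E).toList.idxOf e
      < (Finset.univ : Finset E).toList.length := List.idxOf_lt_length_iff.2 hmem
  unfold pickEv
  simp only [hk, List.getD_eq_getElem _ _ hlt, List.getElem_idxOf hlt]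
  rw [if_pos he]

/-- round-robin extension of a run -/
noncomputable def gseq [Fintype E] (Pr : Protocol E P) (y : List E) : ℕ → List E
  | 0 => y
  | k + 1 =>
      let r := gseq Pr y k
      if h : ∃ e, Pr.Enabled r e then r ++ [pickEv Pr r k h] else r

lemma gseq_mem [Fintype E] (Pr : Protocol E P) {y : List E} (hy : y ∈ Pr.runs) :
    ∀ k, gseq Pr y k ∈ Pr.runs := by
  intro k
  induction k with
  | zero => exact hy
  | succ k ih =>
      show (if h : ∃ e, Pr.Enabled (gseq Pr y k) e then _ else _) ∈ Pr.runs
      split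
      · next h => exact pickEv_enabled Pr _ k h
      · exact ih

lemma gseq_prefix [Fintype E] (Pr : Protocol E P) (y : List E) (k : ℕ) :
    y <+: gseq Pr y k := by
  induction k with
  | zero => exact List.prefix_refl y
  | succ k ih =>
      show y <+: (if h : ∃ e, Pr.Enabled (gseq Pr y k) e then _ else _)
      split
      · exact ih.trans (List.prefix_append _ _)
      · exact ih

lemma gseq_succ_of_enabled [Fintype E] (Pr : Protocol E P) (y : List E) (k : ℕ)
    (h : ∃ e, Pr.Enabled (gseq Pr y k) e) :
    gseq Pr y (k + 1) = gseq Pr y k ++ [pickEv Pr (gseq Pr y k) k h] := by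
  show (if h' : ∃ e, Pr.Enabled (gseq Pr y k) e then _ else _) = _
  rw [dif_pos h]

lemma prefixList_take {π : ℕ → E} {a b : ℕ} (hab : a ≤ b) :
    (prefixList π b).take a = prefixList π a := by
  apply List.ext_getElem
  · simp [prefixList]; omega
  · intro i h1 h2
    simp [prefixList, List.getElem_take]

lemma prefixList_prefix {π : ℕ → E} {a b : ℕ} (hab : a ≤ b) :
    prefixList π a <+: prefixList π b := by
  rw [← prefixList_take hab]; exact List.take_prefix _ _

/-- existence of a fair sequence through any run -/
lemma exists_fair [Fintype E] (Pr : Protocol E P) (y : List E) (hy : y ∈ Pr.runs) :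
    (∃ z, y <+: z ∧ FinFairSeq Pr z) ∨
      (∃ π : ℕ → E, InfFairSeq Pr π ∧ prefixList π y.length = y) := by
  by_cases hterm : ∃ k, ∀ e, ¬ Pr.Enabled (gseq Pr y k) e
  · obtain ⟨k, hk⟩ := hterm
    exact Or.inl ⟨gseq Pr y k, gseq_prefix Pr y k, gseq_mem Pr hy k, hk⟩
  · push_neg at hterm
    -- hterm : ∀ k, ∃ e, Pr.Enabled (gseq Pr y k) e
    set h : ℕ → E := fun j => pickEv Pr (gseq Pr y j) j (hterm j) with hh
    have hgsucc : ∀ j, gseq Pr y (j + 1) = gseq Pr y j ++ [h j] := fun j =>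
      gseq_succ_of_enabled Pr y j (hterm j)
    have hgk : ∀ j, gseq Pr y j = y ++ List.ofFn (fun i : Fin j => h i) := by
      intro j
      induction j with
      | zero => simp [gseq]
      | succ j ih =>
          rw [hgsucc j, ih, List.ofFn_succ']
          simp [List.concat_eq_append]
    have hElen : ∀ j, (gseq Pr y j).length = y.length + j := by
      intro j; rw [hgk j]; simp
    obtain ⟨e0, _⟩ := hterm 0
    set π : ℕ → E := fun n =>
      if hn : n < y.length then y[n] else h (n - y.length) with hπ
    have hpre : ∀ j, prefixList π (y.length + j) = gseq Pr y j := by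
      intro j
      rw [hgk j]
      apply List.ext_getElem
      · simp [prefixList]
      · intro i h1 h2
        simp only [prefixList, List.getElem_ofFn]
        rw [List.getElem_append]
        by_cases hi : i < y.length
        · simp [hπ, hi]
        · simp [hπ, hi, List.getElem_ofFn]
    have hprey : prefixList π y.length = y := by
      have := hpre 0
      simpa [gseq] using this
    have hruns : ∀ k, prefixList π k ∈ Pr.runs := by
      intro k
      rcases le_or_gt y.length k with hk | hk
      · obtain ⟨j, rfl⟩ := Nat.exists_eq_add_of_le hk
        rw [hpre j]; exact gseq_mem Pr hy j
      · exact Pr.prefix_closed _ _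
          ((prefixList_prefix hk.le).trans (hprey ▸ List.prefix_refl _))
          (hprey ▸ hy)
    refine Or.inr ⟨π, ⟨hruns, ?_⟩, hprey⟩
    intro e ⟨N, hN⟩ N'
    set L := (Finset.univ : Finset E).toList with hL
    have hmem : e ∈ L := by simp [hL]
    have hLpos : 0 < L.length := List.length_pos_iff.2 (List.ne_nil_of_mem hmem)
    set i := L.idxOf e with hi
    -- choose j ≥ N + N' with j % L.length = i
    set j := i + L.length * (N + N') with hj
    have hjmod : j % L.length = i := by
      rw [hj, Nat.add_mul_mod_self_left,
        Nat.mod_eq_of_lt (List.idxOf_lt_length_iff.2 hmem)]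
    have hjge : N + N' ≤ j := by
      calc N + N' ≤ L.length * (N + N') := Nat.le_mul_of_pos_left _ hLpos
      _ ≤ j := by omega
    refine ⟨y.length + j, by omega, ?_⟩
    have hen : Pr.Enabled (gseq Pr y j) e := by
      have := hN (y.length + j) (by omega)
      rwa [hpre j] at this
    have : π (y.length + j) = h j := by
      simp [hπ]
    rw [this, hh]
    exact pickEv_eq Pr _ j (hterm j) e hen hjmod

end FEL

section FEL2

open Classical

variable {E P C : Type*}

/-- if `z` is polychromatic and `e` enabled, `z·e` has nonempty color -/
lemma nonempty_col [Fintype E] {Pr : Protocol E P} {col : List E → Set C}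
    (hcol : IsColoring Pr col) (hD : DecisionProtocol Pr col)
    {z : List E} (hz : z ∈ Pr.runs) (hpz : Polychromatic col z)
    {e : E} (hze : z ++ [e] ∈ Pr.runs) : (col (z ++ [e])).Nonempty := by
  set y := z ++ [e] with hy
  have hzy : z <+: y := ⟨[e], rfl⟩
  have hylen : y.length = z.length + 1 := by simp [hy]
  rcases exists_fair Pr y hze with ⟨z', hyz', hz'runs, hnone⟩ | ⟨π, hπ, hprey⟩
  · obtain ⟨p, hp, c', hpc⟩ := hD.1 z' ⟨hz'runs, hnone⟩
    have hpruns : p ∈ Pr.runs := Pr.prefix_closed p z' hp hz'runs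
    rcases List.prefix_or_prefix_of_prefix hp hyz' with hpy | hyp
    · rcases List.prefix_or_prefix_of_prefix hpy hzy with hpz' | hzp
      · exact absurd (hpc ▸ col_anti hcol hpruns hz hpz') (fun hs =>
          poly_not_sub_singleton hpz c' hs)
      · have h1 := hpy.length_le
        have h2 := hzp.length_le
        rcases (by omega : p.length = y.length ∨ p.length = z.length) with hl | hl
        · have : p = y := hpy.eq_of_length hl
          exact ⟨c', by rw [← this, hpc]; rfl⟩
        · have : z = p := hzp.eq_of_length hl.symm
          exact absurd hpz (fun hpoly => poly_not_sub_singleton hpoly c'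
            (by rw [this, hpc]))
    · have : col p ⊆ col y := col_anti hcol hze hpruns hyp
      exact ⟨c', this (by rw [hpc]; rfl)⟩
  · obtain ⟨k, c', hk⟩ := hD.2 π hπ
    rcases le_or_gt y.length k with hyk | hky
    · have hpref : y <+: prefixList π k := hprey ▸ prefixList_prefix hyk
      have : col (prefixList π k) ⊆ col y := col_anti hcol hze (hπ.1 k) hpref
      exact ⟨c', this (by rw [hk]; rfl)⟩
    · have hkz : k ≤ z.length := by omega
      have hpref : prefixList π k <+: z := by
        have h1 : prefixList π k = y.take k := by
          rw [← hprey, prefixList_take (by omega)]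
        have h2 : y.take k = z.take k := by
          rw [hy, List.take_append_of_le_length hkz]
        rw [h1, h2]; exact List.take_prefix _ _
      exact absurd (hk ▸ col_anti hcol (hπ.1 k) hz hpref) (fun hs =>
        poly_not_sub_singleton hpz c' hs)

/-- one-event extension claim -/
lemma extend_one [Fintype E] {Pr : Protocol E P} {col : List E → Set C}
    (hcol : IsColoring Pr col) (hIoD : IoD Pr col) (hD : DecisionProtocol Pr col)
    {v : List E} (hv : v ∈ Pr.runs) (hpv : Polychromatic col v) (e : E) :
    ∃ t, v ++ t ∈ Pr.runs ∧ Polychromatic col (v ++ t) ∧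
      (e ∈ t ∨ ∃ p, p <+: t ∧ ¬ Pr.Enabled (v ++ p) e) := by
  by_cases he : Pr.Enabled v e
  swap
  · exact ⟨[], by simpa using hv, by simpa using hpv,
      Or.inr ⟨[], List.prefix_refl _, by simpa using he⟩⟩
  · have hne : (col (v ++ [e])).Nonempty := nonempty_col hcol hD hv hpv he
    by_cases hp1 : Polychromatic col (v ++ [e])
    · exact ⟨[e], he, hp1, Or.inl (by simp)⟩
    · -- v·e is monochromatic, say of color c
      obtain ⟨c, hcmem⟩ := hne
      have hcsing : col (v ++ [e]) = {c} := by
        ext a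
        constructor
        · intro ha
          by_contra hac
          exact hp1 ⟨a, c, ha, hcmem, hac⟩
        · intro ha; rwa [Set.mem_singleton_iff.mp ha]
      have hcv : c ∈ col v := col_anti hcol hv he ⟨[e], rfl⟩ hcmem
      obtain ⟨d, hdv, hdc⟩ : ∃ d ∈ col v, d ≠ c := by
        obtain ⟨a, b, ha, hb, hab⟩ := hpv
        by_cases hac : a = c
        · exact ⟨b, hb, fun hbc => hab (by rw [hac, hbc])⟩
        · exact ⟨a, ha, hac⟩
      obtain ⟨z, hzruns, hvz, hzcol⟩ := hcol.2.1 v hv d hdv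
      obtain ⟨w, rfl⟩ := hvz
      set n := w.length with hn
      set Q : ℕ → Prop := fun j => Pr.Enabled (v ++ w.take j) e ∧
        col ((v ++ w.take j) ++ [e]) = {c} with hQ
      have hQ0 : Q 0 := by
        constructor
        · simpa using he
        · simpa using hcsing
      have hQn : ¬ Q n := by
        rintro ⟨hen, hmono⟩
        have htw : w.take n = w := by simp [hn]
        rw [htw] at hen hmono
        have : col ((v ++ w) ++ [e]) ⊆ col (v ++ w) :=
          col_anti hcol hzruns hen ⟨[e], rfl⟩
        rw [hmono, hzcol] at this
        exact hdc (Set.mem_singleton_iff.mp (this rfl)).symm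
      have hex : ∃ j, ¬ Q j := ⟨n, hQn⟩
      have hmQ0 : ¬ Q (Nat.find hex) := Nat.find_spec hex
      have hmpos : Nat.find hex ≠ 0 := by
        intro h0
        exact hmQ0 (h0 ▸ hQ0)
      obtain ⟨j, hjm⟩ : ∃ j, Nat.find hex = j + 1 :=
        ⟨Nat.find hex - 1, by omega⟩
      have hmQ : ¬ Q (j + 1) := hjm ▸ hmQ0
      have hQj : Q j := by
        by_contra hcon
        have := Nat.find_min' hex hcon
        omega
      have hjn : j + 1 ≤ n := by
        have := Nat.find_min' hex hQn
        omega
      have hjlt : j < w.length := by omega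
      set f := w[j] with hf
      have htake : w.take (j + 1) = w.take j ++ [f] := by
        rw [List.take_succ, List.getElem?_eq_getElem hjlt]; rfl
      set zj := v ++ w.take j with hzj
      have hzj1 : v ++ w.take (j + 1) = zj ++ [f] := by
        rw [htake, hzj, List.append_assoc]
      have hzjpre : zj <+: v ++ w := by
        refine ⟨w.drop j, ?_⟩
        rw [hzj, List.append_assoc, List.take_append_drop]
      have hzj1pre : v ++ w.take (j + 1) <+: v ++ w := by
        refine ⟨w.drop (j + 1), ?_⟩
        rw [List.append_assoc, List.take_append_drop]
      have hzjruns : zj ∈ Pr.runs := Pr.prefix_closed _ _ hzjpre hzruns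
      have hzj1runs' : v ++ w.take (j + 1) ∈ Pr.runs :=
        Pr.prefix_closed _ _ hzj1pre hzruns
      have hzj1runs : zj ++ [f] ∈ Pr.runs := hzj1 ▸ hzj1runs'
      have hdvw : d ∈ col (v ++ w) := by rw [hzcol]; exact Set.mem_singleton d
      have hdzj : d ∈ col zj := col_anti hcol hzjruns hzruns hzjpre hdvw
      have hdzj1' : d ∈ col (v ++ w.take (j + 1)) :=
        col_anti hcol hzj1runs' hzruns hzj1pre hdvw
      have hdzj1 : d ∈ col (zj ++ [f]) := hzj1 ▸ hdzj1'
      have hczj : c ∈ col zj :=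
        col_anti hcol hzjruns hQj.1 ⟨[e], rfl⟩
          (by rw [hQj.2]; exact Set.mem_singleton c)
      have hpzj : Polychromatic col zj := ⟨c, d, hczj, hdzj, fun h => hdc h.symm⟩
      have hfe : f ≠ e := by
        intro hfe
        have hd' : d ∈ col (zj ++ [e]) := hfe ▸ hdzj1
        rw [hzj, hQj.2] at hd'
        exact hdc (Set.mem_singleton_iff.mp hd')
      have henf : Pr.Enabled zj f := hzj1runs
      obtain ⟨hIo1, hIo2⟩ := hIoD zj hzjruns hpzj e hQj.1 c hQj.2 f hfe henf
      have hpzj1 : Polychromatic col (zj ++ [f]) :=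
        ⟨c, d, hIo1, hdzj1, fun h => hdc h.symm⟩
      have hmQ' : ¬ Q (j + 1) := hmQ
      simp only [hQ] at hmQ'
      push_neg at hmQ'
      by_cases hen1 : Pr.Enabled (v ++ w.take (j + 1)) e
      · -- e enabled at z_{j+1} but col(z_{j+1}·e) ≠ {c}: take e now
        refine ⟨w.take (j + 1) ++ [e], ?_, ?_, Or.inl (by simp)⟩
        · rw [← List.append_assoc]; exact hen1
        · rw [← List.append_assoc]
          have hruns1 : (v ++ w.take (j + 1)) ++ [e] ∈ Pr.runs := hen1
          have hnonemp : (col ((v ++ w.take (j + 1)) ++ [e])).Nonempty :=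
            nonempty_col hcol hD (z := v ++ w.take (j + 1)) hzj1runs'
              (by rw [hzj1]; exact hpzj1) hruns1
          obtain ⟨a, ha⟩ := hnonemp
          by_contra hcon
          have hsing : col ((v ++ w.take (j + 1)) ++ [e]) = {a} := by
            ext b
            simp only [Set.mem_singleton_iff]
            constructor
            · intro hb
              by_contra hba
              exact hcon ⟨b, a, hb, ha, hba⟩
            · intro hb; rwa [hb]
          -- by IoD(ii), a = c, contradicting hmQ'
          have hruns2 : (zj ++ [f]) ++ [e] ∈ Pr.runs := by rw [← hzj1]; exact hruns1
          have hsing2 : col ((zj ++ [f]) ++ [e]) = {a} := by rw [← hzj1]; exact hsing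
          have hac : a = c := hIo2 hruns2 a hsing2
          exact hmQ' hen1 (by rw [← hac]; exact hsing)
      · -- e disabled at z_{j+1}: stop here
        exact ⟨w.take (j + 1), hzj1runs',
          by rw [hzj1]; exact hpzj1,
          Or.inr ⟨w.take (j + 1), List.prefix_refl _, hen1⟩⟩

end FEL2

section FEL3

open Classical

variable {E P C : Type*}

lemma extend_list [Fintype E] {Pr : Protocol E P} {col : List E → Set C}
    (hcol : IsColoring Pr col) (hIoD : IoD Pr col) (hD : DecisionProtocol Pr col)
    (l : List E) :
    ∀ v : List E, v ∈ Pr.runs → Polychromatic col v →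
      ∃ t, v ++ t ∈ Pr.runs ∧ Polychromatic col (v ++ t) ∧
        ∀ e ∈ l, e ∈ t ∨ ∃ p, p <+: t ∧ ¬ Pr.Enabled (v ++ p) e := by
  induction l with
  | nil =>
      intro v hv hpv
      exact ⟨[], by simpa using hv, by simpa using hpv, by simp⟩
  | cons e l ih =>
      intro v hv hpv
      obtain ⟨s, hs1, hs2, hs3⟩ := extend_one hcol hIoD hD hv hpv e
      obtain ⟨t', ht1, ht2, ht3⟩ := ih (v ++ s) hs1 hs2
      refine ⟨s ++ t', by rwa [← List.append_assoc], by rwa [← List.append_assoc], ?_⟩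
      intro e' he'
      rcases List.mem_cons.mp he' with rfl | hmem
      · rcases hs3 with h | ⟨p, hp, hnp⟩
        · exact Or.inl (List.mem_append.mpr (Or.inl h))
        · exact Or.inr ⟨p, hp.trans (List.prefix_append s t'), hnp⟩
      · rcases ht3 e' hmem with h | ⟨p, hp, hnp⟩
        · exact Or.inl (List.mem_append.mpr (Or.inr h))
        · refine Or.inr ⟨s ++ p, ?_, ?_⟩
          · obtain ⟨q, hq⟩ := hp
            exact ⟨q, by rw [List.append_assoc, hq]⟩
          · rw [List.append_assoc] at hnp
            exact hnp

end FEL3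

/-- **Fair-Extension Lemma.** In a polychromatic decision
protocol with a `C`-chromatic coloring satisfying IoD, every polychromatic run
can be extended by a fair extension to another polychromatic run. -/
theorem fair_extension_lemma
    {E P C : Type*} [Fintype E] (Pr : Protocol E P)
    (col : List E → Set C) (hcol : IsColoring Pr col) (hIoD : IoD Pr col)
    (hD : DecisionProtocol Pr col)
    (hpolyrun : ∃ y ∈ Pr.runs, Polychromatic col y)
    (x : List E) (hx : x ∈ Pr.runs) (hpoly : Polychromatic col x) :
    ∃ es : List E, es ≠ [] ∧ FairExtension Pr x es ∧
      Polychromatic col (x ++ es) := by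
  obtain ⟨t, ht1, ht2, ht3⟩ :=
    extend_list hcol hIoD hD (Finset.univ : Finset E).toList x hx hpoly
  rcases eq_or_ne t [] with rfl | htne
  · exfalso
    have hterm : ∀ e, ¬ Pr.Enabled x e := by
      intro e
      rcases ht3 e (by simp) with h | ⟨p, hp, hnp⟩
      · simp at h
      · rw [List.prefix_nil.mp hp] at hnp
        simpa using hnp
    obtain ⟨p, hp, c, hpc⟩ := hD.1 x ⟨hx, hterm⟩
    exact poly_not_sub_singleton hpoly c
      (hpc ▸ col_anti hcol (Pr.prefix_closed p x hp hx) hx hp)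
  · refine ⟨t, htne, ⟨ht1, ?_⟩, ht2⟩
    intro e hen
    rcases ht3 e (by simp) with h | ⟨p, hp, hnp⟩
    · exact h
    · exact absurd (hen p hp) hnp
end

section
/- Any protocol with a C-chromatic coloring that satisfies Independence of Decisions (IoD) and whose empty run is polychromatic has a fair sequence that never reaches a decision: there exists a fair sequence no finite prefix of which is monochromatic. In particular, such a protocol is not a decision protocol. -/
namespace IoDAux

variable {E P C : Type*}

theorem includes_of_prefix (prin : E → Set P) {x y : List E} (h : x <+: y) :
    RunIncludes prin x y := fun _ => h.filter _

theorem col_prefix (Pr : Protocol E P) (col : List E → Set C)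
    (hcol : IsColoring Pr col) {x y : List E}
    (hy : y ∈ Pr.runs) (h : x <+: y) : col y ⊆ col x :=
  hcol.2.2 x (Pr.prefix_closed x y h hy) y hy (includes_of_prefix _ h)

/-- The color set is either polychromatic or empty. -/
def Good (col : List E → Set C) (x : List E) : Prop :=
  Polychromatic col x ∨ col x = ∅

theorem Good.not_mono {col : List E → Set C} {x : List E} (h : Good col x) :
    ¬ Monochromatic col x := by
  rintro ⟨c, hc⟩
  rcases h with ⟨a, b, ha, hb, hab⟩ | h
  · rw [hc] at ha hb
    simp only [Set.mem_singleton_iff] at ha hb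
    exact hab (ha.trans hb.symm)
  · rw [h] at hc
    exact Set.singleton_ne_empty c hc.symm

theorem good_of_not_mono {col : List E → Set C} {x : List E}
    (h : ¬ Monochromatic col x) : Good col x := by
  by_cases he : col x = ∅
  · exact Or.inr he
  · obtain ⟨a, ha⟩ := Set.nonempty_iff_ne_empty.mpr he
    left
    by_contra hp
    unfold Polychromatic at hp
    push_neg at hp
    exact h ⟨a, Set.eq_singleton_iff_unique_mem.mpr ⟨ha, fun b hb => hp b a hb ha⟩⟩

theorem poly_not_mono_prefix (Pr : Protocol E P) (col : List E → Set C)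
    (hcol : IsColoring Pr col) {x : List E} (hx : x ∈ Pr.runs)
    (hp : Polychromatic col x) {p : List E} (hpre : p <+: x) :
    ¬ Monochromatic col p := by
  obtain ⟨a, b, ha, hb, hab⟩ := hp
  rintro ⟨c, hc⟩
  have hsub := col_prefix Pr col hcol hx hpre
  have ha' := hsub ha
  have hb' := hsub hb
  rw [hc] at ha' hb'
  simp only [Set.mem_singleton_iff] at ha' hb'
  exact hab (ha'.trans hb'.symm)

/-- The invariant maintained by the construction. -/
def Inv (col : List E → Set C) (x : List E) : Prop :=
  Good col x ∧ ∀ p, p <+: x → ¬ Monochromatic col p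

theorem walk (Pr : Protocol E P) (col : List E → Set C)
    (hcol : IsColoring Pr col) (hIoD : IoD Pr col)
    (c d : C) (hcd : c ≠ d) (e : E) :
    ∀ (s x : List E), x ∈ Pr.runs → x ++ s ∈ Pr.runs →
      c ∈ col x → d ∈ col x → Pr.Enabled x e → col (x ++ [e]) = {c} →
      col (x ++ s) = {d} →
      ∃ z, z ∈ Pr.runs ∧ x <+: z ∧ x.length < z.length ∧ Polychromatic col z ∧
        (¬ Pr.Enabled z e ∨ (z ++ [e] ∈ Pr.runs ∧ Good col (z ++ [e]))) := by
  intro s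
  induction s with
  | nil =>
    intro x hx hxs hc hd hen hmono hY
    exfalso
    rw [List.append_nil] at hY
    rw [hY] at hc
    exact hcd hc
  | cons e₁ s' ih =>
    intro x hx hxs hc hd hen hmono hY
    have hassoc : x ++ e₁ :: s' = (x ++ [e₁]) ++ s' := by simp
    have hxs' : (x ++ [e₁]) ++ s' ∈ Pr.runs := by rw [← hassoc]; exact hxs
    have hx1 : x ++ [e₁] ∈ Pr.runs :=
      Pr.prefix_closed _ _ (List.prefix_append _ _) hxs'
    have hpoly : Polychromatic col x := ⟨c, d, hc, hd, hcd⟩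
    have hne : e₁ ≠ e := by
      rintro rfl
      have hsub : col (x ++ e₁ :: s') ⊆ col (x ++ [e₁]) := by
        apply col_prefix Pr col hcol hxs
        rw [hassoc]
        exact List.prefix_append _ _
      have hdmem : d ∈ col (x ++ e₁ :: s') := by rw [hY]; exact rfl
      have := hsub hdmem
      rw [hmono] at this
      exact hcd this.symm
    obtain ⟨hcx1, hii⟩ := hIoD x hx hpoly e hen c hmono e₁ hne hx1
    have hdx1 : d ∈ col (x ++ [e₁]) := by
      have hsub : col ((x ++ [e₁]) ++ s') ⊆ col (x ++ [e₁]) :=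
        col_prefix Pr col hcol hxs' (List.prefix_append _ _)
      apply hsub
      rw [← hassoc, hY]
      exact rfl
    have hpoly1 : Polychromatic col (x ++ [e₁]) := ⟨c, d, hcx1, hdx1, hcd⟩
    by_cases hEn : Pr.Enabled (x ++ [e₁]) e
    · by_cases hM : Monochromatic col ((x ++ [e₁]) ++ [e])
      · obtain ⟨c', hc'⟩ := hM
        have hc'c : c' = c := hii hEn c' hc'
        subst hc'c
        have hY' : col ((x ++ [e₁]) ++ s') = {d} := by rw [← hassoc]; exact hY
        obtain ⟨z, hz, hpre, hlen, hp, hres⟩ :=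
          ih (x ++ [e₁]) hx1 hxs' hcx1 hdx1 hEn hc' hY'
        refine ⟨z, hz, (List.prefix_append _ _).trans hpre, ?_, hp, hres⟩
        have : (x ++ [e₁]).length = x.length + 1 := by simp
        omega
      · exact ⟨x ++ [e₁], hx1, List.prefix_append _ _, by simp, hpoly1,
          Or.inr ⟨hEn, good_of_not_mono hM⟩⟩
    · exact ⟨x ++ [e₁], hx1, List.prefix_append _ _, by simp, hpoly1, Or.inl hEn⟩

theorem main_step (Pr : Protocol E P) (col : List E → Set C)
    (hcol : IsColoring Pr col) (hIoD : IoD Pr col)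
    {x : List E} (hx : x ∈ Pr.runs) (hI : Inv col x)
    {e : E} (he : Pr.Enabled x e) :
    ∃ z, z ∈ Pr.runs ∧ x <+: z ∧ x.length < z.length ∧ Inv col z ∧
      (¬ Pr.Enabled z e ∨ e ∈ z.drop x.length) := by
  rcases hI.1 with hpoly | hempty
  · by_cases hM : Monochromatic col (x ++ [e])
    · obtain ⟨c, hc⟩ := hM
      have hcx : c ∈ col x := by
        apply col_prefix Pr col hcol he (List.prefix_append _ _)
        rw [hc]; exact rfl
      obtain ⟨d, hd, hdc⟩ : ∃ d ∈ col x, d ≠ c := by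
        obtain ⟨a, b, ha, hb, hab⟩ := hpoly
        rcases eq_or_ne a c with rfl | hac
        · exact ⟨b, hb, fun hbc => hab hbc.symm⟩
        · exact ⟨a, ha, hac⟩
      obtain ⟨y, hy, hxy, hcoly⟩ := hcol.2.1 x hx d hd
      obtain ⟨s, rfl⟩ := hxy
      obtain ⟨z, hz, hpre, hlen, hpz, hres⟩ :=
        walk Pr col hcol hIoD c d hdc.symm e s x hx hy hcx hd he hc hcoly
      rcases hres with hnE | ⟨hze, hgz⟩
      · refine ⟨z, hz, hpre, hlen, ⟨Or.inl hpz, ?_⟩, Or.inl hnE⟩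
        intro p hp
        exact poly_not_mono_prefix Pr col hcol hz hpz hp
      · refine ⟨z ++ [e], hze, hpre.trans (List.prefix_append _ _),
          by simp; omega, ⟨hgz, ?_⟩, Or.inr ?_⟩
        · intro p hp
          rcases List.prefix_concat_iff.mp hp with rfl | hp'
          · exact hgz.not_mono
          · exact poly_not_mono_prefix Pr col hcol hz hpz hp'
        · rw [List.drop_append_of_le_length hlen.le]
          simp
    · refine ⟨x ++ [e], he, List.prefix_append _ _, by simp,
        ⟨good_of_not_mono hM, ?_⟩, Or.inr ?_⟩
      · intro p hp
        rcases List.prefix_concat_iff.mp hp with rfl | hp'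
        · exact hM
        · exact hI.2 p hp'
      · rw [List.drop_append_of_le_length le_rfl]
        simp
  · have hgood : Good col (x ++ [e]) := by
      right
      apply Set.eq_empty_of_subset_empty
      rw [← hempty]
      exact col_prefix Pr col hcol he (List.prefix_append _ _)
    refine ⟨x ++ [e], he, List.prefix_append _ _, by simp,
      ⟨hgood, ?_⟩, Or.inr ?_⟩
    · intro p hp
      rcases List.prefix_concat_iff.mp hp with rfl | hp'
      · exact hgood.not_mono
      · exact hI.2 p hp'
    · rw [List.drop_append_of_le_length le_rfl]
      simp

variable (Pr : Protocol E P) (col : List E → Set C)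

open Classical in
noncomputable def nextRun (hcol : IsColoring Pr col) (hIoD : IoD Pr col)
    (x : List E) (e : E) : List E :=
  if h : x ∈ Pr.runs ∧ Inv col x ∧ Pr.Enabled x e then
    (main_step Pr col hcol hIoD h.1 h.2.1 h.2.2).choose
  else x

theorem nextRun_spec (hcol : IsColoring Pr col) (hIoD : IoD Pr col)
    {x : List E} {e : E} (hx : x ∈ Pr.runs) (hI : Inv col x)
    (he : Pr.Enabled x e) :
    nextRun Pr col hcol hIoD x e ∈ Pr.runs ∧
    x <+: nextRun Pr col hcol hIoD x e ∧
    x.length < (nextRun Pr col hcol hIoD x e).length ∧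
    Inv col (nextRun Pr col hcol hIoD x e) ∧
    (¬ Pr.Enabled (nextRun Pr col hcol hIoD x e) e ∨
      e ∈ (nextRun Pr col hcol hIoD x e).drop x.length) := by
  rw [nextRun, dif_pos ⟨hx, hI, he⟩]
  exact (main_step Pr col hcol hIoD hx hI he).choose_spec

theorem nextRun_not (hcol : IsColoring Pr col) (hIoD : IoD Pr col)
    {x : List E} {e : E} (h : ¬ Pr.Enabled x e) :
    nextRun Pr col hcol hIoD x e = x :=
  dif_neg (by tauto)

noncomputable def seqRun (hcol : IsColoring Pr col) (hIoD : IoD Pr col)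
    (ev : ℕ → E) : ℕ → List E
  | 0 => []
  | t + 1 => nextRun Pr col hcol hIoD (seqRun hcol hIoD ev t) (ev t)

end IoDAux

/-- Any protocol with a `C`-chromatic coloring satisfying
IoD whose empty run is polychromatic has a fair sequence no finite prefix of
which is monochromatic; in particular it is not a decision protocol. -/
theorem iod_no_decision
    {E P C : Type*} [Fintype E] (Pr : Protocol E P)
    (col : List E → Set C) (hcol : IsColoring Pr col) (hIoD : IoD Pr col)
    (hnil : ([] : List E) ∈ Pr.runs) (hpoly : Polychromatic col ([] : List E)) :
    ((∃ x : List E, FinFairSeq Pr x ∧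
        ∀ p : List E, p <+: x → ¬ Monochromatic col p) ∨
     (∃ π : ℕ → E, InfFairSeq Pr π ∧
        ∀ k : ℕ, ¬ Monochromatic col (prefixList π k))) ∧
    ¬ DecisionProtocol Pr col := by
  classical
  open IoDAux in
  have key : (∃ x : List E, FinFairSeq Pr x ∧
        ∀ p : List E, p <+: x → ¬ Monochromatic col p) ∨
     (∃ π : ℕ → E, InfFairSeq Pr π ∧
        ∀ k : ℕ, ¬ Monochromatic col (prefixList π k)) := by
    have hInvNil : Inv col ([] : List E) := by
      refine ⟨Or.inl hpoly, ?_⟩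
      intro p hp
      rw [List.prefix_nil] at hp
      subst hp
      exact Good.not_mono (Or.inl hpoly)
    rcases isEmpty_or_nonempty E with hE | hE
    · left
      exact ⟨[], ⟨hnil, fun e => isEmptyElim e⟩, hInvNil.2⟩
    · obtain ⟨e₀⟩ := hE
      have hcard : 0 < Fintype.card E := Fintype.card_pos_iff.mpr ⟨e₀⟩
      set n := Fintype.card E with hn
      set ev : ℕ → E := fun t => (Fintype.equivFin E).symm ⟨t % n, Nat.mod_lt _ hcard⟩
        with hev
      have hev_surj : ∀ (e : E) (N : ℕ), ∃ t, N ≤ t ∧ ev t = e := by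
        intro e N
        refine ⟨((Fintype.equivFin E) e : ℕ) + n * N, ?_, ?_⟩
        · calc N ≤ n * N := Nat.le_mul_of_pos_left _ hcard
            _ ≤ _ := Nat.le_add_left _ _
        · have hmod : (((Fintype.equivFin E) e : ℕ) + n * N) % n
              = ((Fintype.equivFin E) e : ℕ) := by
            rw [Nat.add_mul_mod_self_left]
            exact Nat.mod_eq_of_lt ((Fintype.equivFin E) e).2
          simp only [hev]
          rw [show (⟨(((Fintype.equivFin E) e : ℕ) + n * N) % n, Nat.mod_lt _ hcard⟩ :
              Fin n) = (Fintype.equivFin E) e from Fin.ext hmod]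
          exact Equiv.symm_apply_apply _ _
      set X : ℕ → List E := seqRun Pr col hcol hIoD ev with hX
      have hXstep : ∀ t, X (t + 1) = nextRun Pr col hcol hIoD (X t) (ev t) :=
        fun t => rfl
      have hXmem : ∀ t, X t ∈ Pr.runs ∧ Inv col (X t) := by
        intro t
        induction t with
        | zero => exact ⟨hnil, hInvNil⟩
        | succ t ih =>
          rw [hXstep]
          by_cases h : Pr.Enabled (X t) (ev t)
          · obtain ⟨h1, _, _, h4, _⟩ := nextRun_spec Pr col hcol hIoD ih.1 ih.2 h
            exact ⟨h1, h4⟩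
          · rw [nextRun_not Pr col hcol hIoD h]
            exact ih
      have hXpre : ∀ t, X t <+: X (t + 1) := by
        intro t
        rw [hXstep]
        by_cases h : Pr.Enabled (X t) (ev t)
        · exact (nextRun_spec Pr col hcol hIoD (hXmem t).1 (hXmem t).2 h).2.1
        · rw [nextRun_not Pr col hcol hIoD h]
      have hXchain : ∀ s t, s ≤ t → X s <+: X t := by
        intro s t h
        induction h with
        | refl => exact List.prefix_refl _
        | step h ih => exact ih.trans (hXpre _)
      by_cases hA : ∃ t, ∀ e, ¬ Pr.Enabled (X t) e
      · left
        obtain ⟨t, ht⟩ := hA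
        exact ⟨X t, ⟨(hXmem t).1, ht⟩, (hXmem t).2.2⟩
      · right
        push_neg at hA
        have hgrow : ∀ t, ∃ t', t ≤ t' ∧ (X t').length < (X (t' + 1)).length := by
          intro t
          by_contra hcon
          push_neg at hcon
          have hconst : ∀ t', t ≤ t' → X t' = X t := by
            intro t' ht'
            induction ht' with
            | refl => rfl
            | @step t'' h ih =>
              have h1 : X t'' <+: X (t'' + 1) := hXpre t''
              have h2 : (X (t'' + 1)).length ≤ (X t'').length := hcon t'' h
              have : X t'' = X (t'' + 1) :=
                h1.eq_of_length (le_antisymm h1.length_le h2)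
              rw [← this, ih]
          obtain ⟨e, he⟩ := hA t
          obtain ⟨t', ht', hevt⟩ := hev_surj e t
          have hXt' : X t' = X t := hconst t' ht'
          have hEn : Pr.Enabled (X t') (ev t') := by rw [hXt', hevt]; exact he
          have hlt := (nextRun_spec Pr col hcol hIoD (hXmem t').1 (hXmem t').2
            hEn).2.2.1
          rw [← hXstep t'] at hlt
          exact absurd hlt (not_lt.mpr (hcon t' ht'))
        have hunb : ∀ m, ∃ t, m < (X t).length := by
          intro m
          induction m with
          | zero =>
            obtain ⟨t', _, h⟩ := hgrow 0
            exact ⟨t' + 1, by omega⟩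
          | succ m ih =>
            obtain ⟨t, hm⟩ := ih
            obtain ⟨t', ht', h⟩ := hgrow t
            have hle : (X t).length ≤ (X t').length := (hXchain t t' ht').length_le
            exact ⟨t' + 1, by omega⟩
        choose T hT using hunb
        set π : ℕ → E := fun k => (X (T k)).getD k e₀ with hπ
        have hagree : ∀ t k (hk : k < (X t).length), π k = (X t)[k] := by
          intro t k hk
          rcases le_total t (T k) with h | h
          · have hpre := hXchain t (T k) h
            show (X (T k)).getD k e₀ = (X t)[k]
            rw [List.getD_eq_getElem _ _ (hT k)]
            exact (hpre.getElem hk).symm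
          · have hpre := hXchain (T k) t h
            show (X (T k)).getD k e₀ = (X t)[k]
            rw [List.getD_eq_getElem _ _ (hT k)]
            exact hpre.getElem (hT k)
        have hpreeq : ∀ t k, k ≤ (X t).length → prefixList π k = (X t).take k := by
          intro t k hk
          apply List.ext_getElem
          · simp [prefixList]
            omega
          · intro i h1 h2
            have hik : i < k := by simpa [prefixList] using h1
            rw [show (prefixList π k)[i] = π i by simp [prefixList]]
            rw [List.getElem_take]
            exact hagree t i (lt_of_lt_of_le hik hk)
        have hXeq : ∀ t, prefixList π ((X t).length) = X t := by
          intro t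
          rw [hpreeq t _ le_rfl, List.take_length]
        refine ⟨π, ⟨?_, ?_⟩, ?_⟩
        · intro k
          rw [hpreeq (T k) k (hT k).le]
          exact Pr.prefix_closed _ _ (List.take_prefix _ _) (hXmem (T k)).1
        · rintro e ⟨N, hN⟩ M
          obtain ⟨t₀, ht₀⟩ : ∃ t, max N M < (X t).length := ⟨T (max N M), hT (max N M)⟩
          obtain ⟨t, htt, hevt⟩ := hev_surj e t₀
          subst hevt
          have hlen : max N M < (X t).length :=
            lt_of_lt_of_le ht₀ (hXchain t₀ t htt).length_le
          have hEn : Pr.Enabled (X t) (ev t) := by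
            have := hN (X t).length (by omega)
            rwa [hXeq t] at this
          have hspec := nextRun_spec Pr col hcol hIoD (hXmem t).1 (hXmem t).2 hEn
          rw [← hXstep t] at hspec
          rcases hspec.2.2.2.2 with hnE | hmem
          · exfalso
            have hlen1 : N ≤ (X (t + 1)).length := by
              have := (hXpre t).length_le
              omega
            have := hN (X (t + 1)).length hlen1
            rw [hXeq (t + 1)] at this
            exact hnE this
          · obtain ⟨i, hi, hie⟩ := List.getElem_of_mem hmem
            rw [List.getElem_drop] at hie
            have hilen : (X t).length + i < (X (t + 1)).length := by
              simp only [List.length_drop] at hi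
              omega
            refine ⟨(X t).length + i, by omega, ?_⟩
            rw [hagree (t + 1) _ hilen]
            exact hie
        · intro k
          rw [hpreeq (T k) k (hT k).le]
          exact (hXmem (T k)).2.2 _ (List.take_prefix _ _)
  refine ⟨key, ?_⟩
  rintro ⟨hD1, hD2⟩
  rcases key with ⟨x, hfx, hnm⟩ | ⟨π, hfπ, hnm⟩
  · obtain ⟨p, hp, hm⟩ := hD1 x hfx
    exact hnm p hp hm
  · obtain ⟨k, hm⟩ := hD2 π hfπ
    exact hnm k hm
end

section
/- Every resilient consensus protocol satisfies Independence of Decisions (IoD). That is, if a protocol with a C-chromatic coloring has the property that every event is associated with exactly one principal (each event is a message annotated with its intended recipient process), and the protocol satisfies the resiliency property (Res), then it satisfies IoD. -/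
/-- The resiliency property `Res`: for each run `x` and each principal `i`
there is a monochromatic run extending `x` that is equivalent to `x` with
respect to `{i}` (i.e. that involves no further events seen by `i`). -/
def Resilient {E P C : Type*} (Pr : Protocol E P)
    (col : List E → Set C) : Prop :=
  ∀ x ∈ Pr.runs, ∀ i : P, ∃ y ∈ Pr.runs,
    x <+: y ∧ Monochromatic col y ∧ RunEquiv Pr.prin {i} x y


open Classical in
lemma restrict_snoc {E P : Type*} (prin : E → Set P) (Q : Set P) (x : List E) (e : E) :
    restrictRun prin Q (x ++ [e]) =
      restrictRun prin Q x ++ if (prin e ∩ Q).Nonempty then [e] else [] := by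
  unfold restrictRun
  rw [List.filter_append]
  congr 1
  by_cases h : (prin e ∩ Q).Nonempty <;> simp [h]

lemma prefix_includes {E P : Type*} (prin : E → Set P) {x y : List E} (h : x <+: y) :
    RunIncludes prin x y := fun _ => h.filter _

open Classical in
lemma includes_snoc {E P : Type*} (prin : E → Set P) {i : P}
    {x z : List E} (e : E) (hpe : prin e = {i})
    (hinc : RunIncludes prin x z)
    (heq : restrictRun prin {i} x = restrictRun prin {i} z) :
    RunIncludes prin (x ++ [e]) (z ++ [e]) := by
  intro p
  rw [restrict_snoc, restrict_snoc]
  by_cases hp : (prin e ∩ ({p} : Set P)).Nonempty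
  · have hpi : p = i := by
      rw [hpe, Set.singleton_inter_nonempty, Set.mem_singleton_iff] at hp
      exact hp.symm
    subst hpi
    rw [heq]
  · simp only [if_neg hp, List.append_nil]
    exact hinc p

/-- Every resilient consensus protocol — a protocol with a
`C`-chromatic coloring in which every event's principal set is a singleton
and which satisfies `Res` — satisfies Independence of Decisions. -/
theorem resilient_consensus_satisfies_iod
    {E P C : Type*} [Fintype E] (Pr : Protocol E P)
    (col : List E → Set C) (hcol : IsColoring Pr col)
    (hsingle : ∀ e : E, ∃ p : P, Pr.prin e = {p})
    (hres : Resilient Pr col) :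
    IoD Pr col := by
  obtain ⟨hC1, hC2, hC3⟩ := hcol
  intro x hx _hpoly e he c hc e' _hne' he'
  obtain ⟨i, hi⟩ := hsingle e
  have he : x ++ [e] ∈ Pr.runs := he
  have he' : x ++ [e'] ∈ Pr.runs := he'
  have hnecol : ∀ y ∈ Pr.runs, (col y).Nonempty := by
    intro y hy
    obtain ⟨w, hw, hyw, ⟨d, hd⟩, -⟩ := hres y hy i
    exact ⟨d, hC3 y hy w hw (prefix_includes Pr.prin hyw) (by simp [hd])⟩
  by_cases hmem : i ∈ Pr.prin e'
  · -- e' has the same principal i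
    obtain ⟨j, hj⟩ := hsingle e'
    have hje' : Pr.prin e' = {i} := by
      rw [hj] at hmem ⊢
      rw [Set.mem_singleton_iff] at hmem
      rw [hmem]
    obtain ⟨z, hz, hxz, ⟨d, hd⟩, heq⟩ := hres x hx i
    have heq : restrictRun Pr.prin {i} x = restrictRun Pr.prin {i} z := heq
    have hincxz : RunIncludes Pr.prin x z := prefix_includes Pr.prin hxz
    have hze : z ++ [e] ∈ Pr.runs :=
      Pr.p2 x z e he hz hincxz (by rw [RunEquiv, hi]; exact heq)
    have hince : RunIncludes Pr.prin (x ++ [e]) (z ++ [e]) :=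
      includes_snoc Pr.prin e hi hincxz heq
    have h1 : col (z ++ [e]) ⊆ {c} := hc ▸ hC3 (x ++ [e]) he (z ++ [e]) hze hince
    have h2 : col (z ++ [e]) ⊆ {d} :=
      hd ▸ hC3 z hz (z ++ [e]) hze (prefix_includes Pr.prin ⟨[e], rfl⟩)
    obtain ⟨k, hk⟩ := hnecol _ hze
    have hdc : d = c :=
      (Set.mem_singleton_iff.mp (h2 hk)).symm.trans (Set.mem_singleton_iff.mp (h1 hk))
    have hze' : z ++ [e'] ∈ Pr.runs :=
      Pr.p2 x z e' he' hz hincxz (by rw [RunEquiv, hje']; exact heq)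
    have hince' : RunIncludes Pr.prin (x ++ [e']) (z ++ [e']) :=
      includes_snoc Pr.prin e' hje' hincxz heq
    have h3 : col (z ++ [e']) ⊆ col (x ++ [e']) := hC3 _ he' _ hze' hince'
    have h4 : col (z ++ [e']) ⊆ {d} :=
      hd ▸ hC3 z hz _ hze' (prefix_includes Pr.prin ⟨[e'], rfl⟩)
    obtain ⟨k', hk'⟩ := hnecol _ hze'
    have hk'c : k' = c := (Set.mem_singleton_iff.mp (h4 hk')).trans hdc
    refine ⟨hk'c ▸ h3 hk', ?_⟩
    intro hrun d2 hd2
    have heq' : restrictRun Pr.prin {i} (x ++ [e']) = restrictRun Pr.prin {i} (z ++ [e']) := by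
      rw [restrict_snoc, restrict_snoc, heq]
    have hzee : (z ++ [e']) ++ [e] ∈ Pr.runs :=
      Pr.p2 (x ++ [e']) (z ++ [e']) e hrun hze' hince' (by rw [RunEquiv, hi]; exact heq')
    have hincee : RunIncludes Pr.prin ((x ++ [e']) ++ [e]) ((z ++ [e']) ++ [e]) :=
      includes_snoc Pr.prin e hi hince' heq'
    have h5 : col ((z ++ [e']) ++ [e]) ⊆ {d2} := hd2 ▸ hC3 _ hrun _ hzee hincee
    have h6 : col ((z ++ [e']) ++ [e]) ⊆ {d} := fun k hk =>
      h4 (hC3 _ hze' _ hzee (prefix_includes Pr.prin ⟨[e], rfl⟩) hk)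
    obtain ⟨k'', hk''⟩ := hnecol _ hzee
    exact (Set.mem_singleton_iff.mp (h5 hk'')).symm.trans
      ((Set.mem_singleton_iff.mp (h6 hk'')).trans hdc)
  · -- i is not a principal of e'
    have hnint : ¬ (Pr.prin e' ∩ ({i} : Set P)).Nonempty := by
      rw [Set.inter_singleton_nonempty]; exact hmem
    obtain ⟨z, hz, hxez, ⟨d, hd⟩, heq0⟩ := hres (x ++ [e']) he' i
    have heq0 : restrictRun Pr.prin {i} (x ++ [e']) = restrictRun Pr.prin {i} z := heq0
    rw [restrict_snoc, if_neg hnint, List.append_nil] at heq0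
    have hincxz : RunIncludes Pr.prin x z :=
      prefix_includes Pr.prin ((List.prefix_append x [e']).trans hxez)
    have hze : z ++ [e] ∈ Pr.runs :=
      Pr.p2 x z e he hz hincxz (by rw [RunEquiv, hi]; exact heq0)
    have hince : RunIncludes Pr.prin (x ++ [e]) (z ++ [e]) :=
      includes_snoc Pr.prin e hi hincxz heq0
    have h1 : col (z ++ [e]) ⊆ {c} := hc ▸ hC3 (x ++ [e]) he (z ++ [e]) hze hince
    have h2 : col (z ++ [e]) ⊆ {d} :=
      hd ▸ hC3 z hz (z ++ [e]) hze (prefix_includes Pr.prin ⟨[e], rfl⟩)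
    obtain ⟨k, hk⟩ := hnecol _ hze
    have hdc : d = c :=
      (Set.mem_singleton_iff.mp (h2 hk)).symm.trans (Set.mem_singleton_iff.mp (h1 hk))
    have hcz : c ∈ col (x ++ [e']) := by
      have hdz : d ∈ col (x ++ [e']) :=
        hC3 _ he' z hz (prefix_includes Pr.prin hxez) (by simp [hd])
      exact hdc ▸ hdz
    refine ⟨hcz, ?_⟩
    intro hrun d2 hd2
    have hinc2 : RunIncludes Pr.prin (x ++ [e]) ((x ++ [e']) ++ [e]) := by
      intro p
      rw [restrict_snoc, restrict_snoc, restrict_snoc]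
      by_cases hp : (Pr.prin e ∩ ({p} : Set P)).Nonempty
      · have hpi : p = i := by
          rw [hi, Set.singleton_inter_nonempty, Set.mem_singleton_iff] at hp
          exact hp.symm
        subst hpi
        rw [if_neg hnint, List.append_nil]
      · simp only [if_neg hp, List.append_nil]
        exact List.prefix_append _ _
    have hsub : col ((x ++ [e']) ++ [e]) ⊆ {c} := hc ▸ hC3 _ he _ hrun hinc2
    exact Set.mem_singleton_iff.mp (hsub (by rw [hd2]; exact rfl))
end

section
/- (Fischer–Lynch–Paterson, derived axiomatically) There is no always-terminating resilient consensus protocol: if a protocol with a C-chromatic coloring has every event associated with exactly one principal, satisfies the resiliency property (Res), and its empty run is polychromatic, then it has a fair sequence no finite prefix of which is monochromatic; in particular it is not a decision protocol. -/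
section helpers

variable {E P C : Type*}

lemma restrict_append (prin : E → Set P) (Q : Set P) (x y : List E) :
    restrictRun prin Q (x ++ y) = restrictRun prin Q x ++ restrictRun prin Q y :=
  List.filter_append ..

lemma restrict_single_mem (prin : E → Set P) {Q : Set P} {e : E}
    (h : (prin e ∩ Q).Nonempty) : restrictRun prin Q [e] = [e] := by
  simp [restrictRun, h]

lemma restrict_single_not_mem (prin : E → Set P) {Q : Set P} {e : E}
    (h : ¬ (prin e ∩ Q).Nonempty) : restrictRun prin Q [e] = [] := by
  simp [restrictRun, h]

lemma singleton_inter_singleton_nonempty {p q : P} :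
    (({p} : Set P) ∩ {q}).Nonempty ↔ p = q := by
  rw [Set.singleton_inter_nonempty, Set.mem_singleton_iff]

lemma includes_of_prefix (prin : E → Set P) {x y : List E} (h : x <+: y) :
    RunIncludes prin x y := fun _ => h.filter _

lemma equiv_append (prin : E → Set P) {Q : Set P} {x y : List E}
    (h : RunEquiv prin Q x y) (f : E) :
    RunEquiv prin Q (x ++ [f]) (y ++ [f]) := by
  unfold RunEquiv at h ⊢
  rw [restrict_append, restrict_append, h]

lemma equiv_append_self (prin : E → Set P) {p q : P} {f : E}
    (hf : prin f = {q}) (hq : q ≠ p) (x : List E) :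
    RunEquiv prin {p} x (x ++ [f]) := by
  unfold RunEquiv
  rw [restrict_append, restrict_single_not_mem prin (by
    rw [hf, singleton_inter_singleton_nonempty]; exact hq), List.append_nil]

/-- Appending the same `p`-event to `p`-equivalent runs preserves inclusion. -/
lemma includes_append_event (prin : E → Set P) {p : P} {x y : List E} {e : E}
    (hp : prin e = {p}) (hinc : RunIncludes prin x y) (heq : RunEquiv prin {p} x y) :
    RunIncludes prin (x ++ [e]) (y ++ [e]) := by
  intro q
  rw [restrict_append, restrict_append]
  by_cases hq : q = p
  · subst hq
    rw [restrict_single_mem prin (by rw [hp, singleton_inter_singleton_nonempty]),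
      show restrictRun prin {q} x = restrictRun prin {q} y from heq]
  · rw [restrict_single_not_mem prin (by
      rw [hp, singleton_inter_singleton_nonempty]; exact fun h => hq h.symm),
      List.append_nil, List.append_nil]
    exact hinc q

section coloring

variable (Pr : Protocol E P) (col : List E → Set C)

lemma col_subset (hcol : IsColoring Pr col) {x y : List E}
    (hx : x ∈ Pr.runs) (hy : y ∈ Pr.runs) (h : x <+: y) : col y ⊆ col x :=
  hcol.2.2 x hx y hy (includes_of_prefix Pr.prin h)

lemma col_nonempty (hcol : IsColoring Pr col) (hres : Resilient Pr col)
    {x : List E} (hx : x ∈ Pr.runs) (i : P) : (col x).Nonempty := by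
  obtain ⟨y, hy, hxy, ⟨c, hc⟩, -⟩ := hres x hx i
  exact ⟨c, col_subset Pr col hcol hx hy hxy (by rw [hc]; rfl)⟩

lemma not_mono_of_poly {x : List E} (h : Polychromatic col x) :
    ¬ Monochromatic col x := by
  rintro ⟨c₀, h₀⟩
  obtain ⟨c, d, hc, hd, hcd⟩ := h
  rw [h₀, Set.mem_singleton_iff] at hc hd
  exact hcd (hc.trans hd.symm)

lemma poly_of_prefix (hcol : IsColoring Pr col) {x y : List E}
    (hx : x ∈ Pr.runs) (hy : y ∈ Pr.runs) (h : x <+: y)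
    (hp : Polychromatic col y) : Polychromatic col x := by
  obtain ⟨c, d, hc, hd, hcd⟩ := hp
  exact ⟨c, d, col_subset Pr col hcol hx hy h hc, col_subset Pr col hcol hx hy h hd, hcd⟩

lemma mono_of_not_poly {x : List E} (hne : (col x).Nonempty)
    (h : ¬ Polychromatic col x) : ∃ c, col x = {c} := by
  obtain ⟨c, hc⟩ := hne
  refine ⟨c, Set.eq_singleton_iff_unique_mem.mpr ⟨hc, fun d hd => ?_⟩⟩
  by_contra hdc
  exact h ⟨d, c, hd, hc, hdc⟩

lemma col_eq_singleton_of_subset {x : List E} {c : C} (hne : (col x).Nonempty)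
    (h : col x ⊆ {c}) : col x = {c} := by
  obtain ⟨d, hd⟩ := hne
  have := h hd
  rw [Set.mem_singleton_iff] at this
  subst this
  exact Set.eq_singleton_iff_unique_mem.mpr ⟨hd, fun y hy => h hy⟩

end coloring

end helpers

section extension

variable {E P C : Type*} {Pr : Protocol E P} {col : List E → Set C}

lemma extension_lemma (hcol : IsColoring Pr col)
    (hsingle : ∀ e : E, ∃ p : P, Pr.prin e = {p}) (hres : Resilient Pr col)
    {x : List E} (hx : x ∈ Pr.runs) (hxp : Polychromatic col x)
    {e : E} (he : Pr.Enabled x e) :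
    ∃ y, y ∈ Pr.runs ∧ x <+: y ∧ Polychromatic col y ∧
      (¬ Pr.Enabled y e ∨ ∃ y', x <+: y' ∧ y = y' ++ [e]) := by
  obtain ⟨p, hp⟩ := hsingle e
  by_contra hcon
  push_neg at hcon
  have key : ∀ y, y ∈ Pr.runs → x <+: y → Polychromatic col y →
      Pr.Enabled y e ∧ ∃ c, col (y ++ [e]) = {c} := by
    intro y hy hxy hyp
    obtain ⟨hen, h2⟩ := hcon y hy hxy hyp
    have hye : y ++ [e] ∈ Pr.runs := hen
    refine ⟨hen, mono_of_not_poly col (col_nonempty Pr col hcol hres hye p) ?_⟩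
    intro hpp
    exact (hcon (y ++ [e]) hye (hxy.trans (List.prefix_append y [e])) hpp).2 y hxy rfl
  obtain ⟨hxe', hcex⟩ := key x hx List.prefix_rfl hxp
  have hxe : x ++ [e] ∈ Pr.runs := hxe'
  obtain ⟨c, hc⟩ := hcex
  have hcx : c ∈ col x :=
    col_subset Pr col hcol hx hxe (List.prefix_append x [e]) (by rw [hc]; exact rfl)
  obtain ⟨a, b, ha, hb, hab⟩ := hxp
  obtain ⟨d, hd, hdc⟩ : ∃ d, d ∈ col x ∧ d ≠ c := by
    by_cases hac : a = c
    · exact ⟨b, hb, fun h => hab (hac.trans h.symm)⟩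
    · exact ⟨a, ha, hac⟩
  obtain ⟨w, hw, hxw, hwd⟩ := hcol.2.1 x hx d hd
  obtain ⟨s, rfl⟩ := hxw
  suffices haux : c ∈ col (x ++ s) by
    rw [hwd] at haux
    exact hdc (Set.mem_singleton_iff.mp haux).symm
  have aux : ∀ (s' x' : List E), x' ∈ Pr.runs → x <+: x' →
      x' ++ [e] ∈ Pr.runs → col (x' ++ [e]) = {c} → x' ++ s' = x ++ s →
      c ∈ col (x ++ s) := by
    intro s'
    induction s' with
    | nil =>
      intro x' hx' hxx' hx'e hc' heq
      rw [List.append_nil] at heq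
      rw [← heq]
      exact col_subset Pr col hcol hx' hx'e (List.prefix_append _ _)
        (by rw [hc']; exact rfl)
    | cons f s'' ih =>
      intro x' hx' hxx' hx'e hc' heq
      have heq2 : (x' ++ [f]) ++ s'' = x ++ s := by
        rw [List.append_assoc]; simpa using heq
      have hx'f : x' ++ [f] ∈ Pr.runs := Pr.prefix_closed _ _ ⟨s'', heq2⟩ hw
      have hxx'f : x <+: x' ++ [f] := hxx'.trans (List.prefix_append _ _)
      obtain ⟨pf, hpf⟩ := hsingle f
      by_cases hpfp : pf = p
      · -- `f` is an event of `e`'s principal `p`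
        have hpf' : Pr.prin f = {p} := by rw [hpf, hpfp]
        obtain ⟨z, hz, hx'z, ⟨cz, hcz⟩, hzeq⟩ := hres x' hx' p
        have hze : z ++ [e] ∈ Pr.runs :=
          Pr.p2 x' z e hx'e hz (includes_of_prefix _ hx'z) (hp ▸ hzeq)
        have hincze : RunIncludes Pr.prin (x' ++ [e]) (z ++ [e]) :=
          includes_append_event _ hp (includes_of_prefix _ hx'z) hzeq
        have hzec : col (z ++ [e]) = {c} :=
          col_eq_singleton_of_subset col (col_nonempty Pr col hcol hres hze p)
            (by rw [← hc']; exact hcol.2.2 _ hx'e _ hze hincze)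
        have hzc : col z = {c} := by
          have h1 : c ∈ col z :=
            col_subset Pr col hcol hz hze (List.prefix_append _ _)
              (by rw [hzec]; exact rfl)
          rw [hcz] at h1 ⊢
          rw [Set.mem_singleton_iff.mp h1]
        have hzf : z ++ [f] ∈ Pr.runs :=
          Pr.p2 x' z f hx'f hz (includes_of_prefix _ hx'z) (hpf' ▸ hzeq)
        have hzfc : col (z ++ [f]) = {c} :=
          col_eq_singleton_of_subset col (col_nonempty Pr col hcol hres hzf p)
            (by rw [← hzc]; exact col_subset Pr col hcol hz hzf (List.prefix_append _ _))
        have hincf : RunIncludes Pr.prin (x' ++ [f]) (z ++ [f]) :=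
          includes_append_event _ hpf' (includes_of_prefix _ hx'z) hzeq
        have hcin : c ∈ col (x' ++ [f]) :=
          hcol.2.2 _ hx'f _ hzf hincf (by rw [hzfc]; exact rfl)
        rcases s'' with _ | ⟨g, s₃⟩
        · rw [List.append_nil] at heq2
          rw [← heq2]
          exact hcin
        · have hdin : d ∈ col (x' ++ [f]) :=
            col_subset Pr col hcol hx'f hw ⟨_, heq2⟩ (by rw [hwd]; exact rfl)
          have hpoly : Polychromatic col (x' ++ [f]) :=
            ⟨c, d, hcin, hdin, fun h => hdc h.symm⟩
          obtain ⟨hx'fe', hcex'⟩ := key (x' ++ [f]) hx'f hxx'f hpoly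
          have hx'fe : (x' ++ [f]) ++ [e] ∈ Pr.runs := hx'fe'
          obtain ⟨c', hc''⟩ := hcex'
          have heqf : RunEquiv Pr.prin {p} (x' ++ [f]) (z ++ [f]) :=
            equiv_append _ hzeq f
          have hzfe : (z ++ [f]) ++ [e] ∈ Pr.runs :=
            Pr.p2 (x' ++ [f]) (z ++ [f]) e hx'fe hzf hincf (hp ▸ heqf)
          have hzfec : col ((z ++ [f]) ++ [e]) = {c} :=
            col_eq_singleton_of_subset col (col_nonempty Pr col hcol hres hzfe p)
              (by rw [← hzfc]; exact col_subset Pr col hcol hzf hzfe (List.prefix_append _ _))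
          have hincfe : RunIncludes Pr.prin ((x' ++ [f]) ++ [e]) ((z ++ [f]) ++ [e]) :=
            includes_append_event _ hp hincf heqf
          have hmem : c ∈ col ((x' ++ [f]) ++ [e]) :=
            hcol.2.2 _ hx'fe _ hzfe hincfe (by rw [hzfec]; exact rfl)
          rw [hc''] at hmem
          have hc'c : col ((x' ++ [f]) ++ [e]) = {c} := by
            rw [hc'', Set.mem_singleton_iff.mp hmem]
          exact ih (x' ++ [f]) hx'f hxx'f hx'fe hc'c heq2
      · -- `f` is an event of another principal
        have heqv : RunEquiv Pr.prin {p} x' (x' ++ [f]) :=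
          equiv_append_self _ hpf hpfp x'
        have hx'fe : (x' ++ [f]) ++ [e] ∈ Pr.runs :=
          Pr.p2 x' (x' ++ [f]) e hx'e hx'f
            (includes_of_prefix _ (List.prefix_append _ _)) (hp ▸ heqv)
        have hincfe : RunIncludes Pr.prin (x' ++ [e]) ((x' ++ [f]) ++ [e]) :=
          includes_append_event _ hp
            (includes_of_prefix _ (List.prefix_append _ _)) heqv
        have hcfe : col ((x' ++ [f]) ++ [e]) = {c} :=
          col_eq_singleton_of_subset col (col_nonempty Pr col hcol hres hx'fe p)
            (by rw [← hc']; exact hcol.2.2 _ hx'e _ hx'fe hincfe)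
        exact ih (x' ++ [f]) hx'f hxx'f hx'fe hcfe heq2
  exact aux s x hx List.prefix_rfl hxe hc rfl

end extension

lemma exists_cyclic (E : Type*) [Fintype E] [Nonempty E] :
    ∃ ν : ℕ → E, ∀ (e : E) (N : ℕ), ∃ k, N ≤ k ∧ ν k = e := by
  classical
  set l := (Finset.univ : Finset E).toList with hl
  have hlen : 0 < l.length := by
    rw [hl, Finset.length_toList]
    exact Finset.card_pos.mpr Finset.univ_nonempty
  refine ⟨fun k => l[k % l.length]'(Nat.mod_lt _ hlen), ?_⟩
  intro e N
  have he : e ∈ l := by rw [hl]; exact Finset.mem_toList.mpr (Finset.mem_univ e)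
  obtain ⟨i, hi, hie⟩ := List.mem_iff_getElem.mp he
  refine ⟨i + l.length * (N + 1), ?_, ?_⟩
  · calc N ≤ l.length * (N + 1) := by nlinarith
      _ ≤ i + l.length * (N + 1) := Nat.le_add_left _ _
  · have hidx : (i + l.length * (N + 1)) % l.length = i := by
      rw [Nat.add_mul_mod_self_left, Nat.mod_eq_of_lt hi]
    simp only [hidx]
    exact hie

/-- **Fischer–Lynch–Paterson, axiomatically.** A resilient
consensus protocol (every event's principal set is a singleton, `Res` holds)
whose empty run is polychromatic has a fair sequence no finite prefix of
which is monochromatic; in particular it is not a decision protocol. -/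
theorem flp_no_resilient_consensus
    {E P C : Type*} [Fintype E] (Pr : Protocol E P)
    (col : List E → Set C) (hcol : IsColoring Pr col)
    (hsingle : ∀ e : E, ∃ p : P, Pr.prin e = {p})
    (hres : Resilient Pr col)
    (hnil : ([] : List E) ∈ Pr.runs) (hpoly : Polychromatic col ([] : List E)) :
    ((∃ x : List E, FinFairSeq Pr x ∧
        ∀ p : List E, p <+: x → ¬ Monochromatic col p) ∨
     (∃ π : ℕ → E, InfFairSeq Pr π ∧
        ∀ k : ℕ, ¬ Monochromatic col (prefixList π k))) ∧
    ¬ DecisionProtocol Pr col := by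
    classical
  have main : (∃ x : List E, FinFairSeq Pr x ∧
        ∀ p : List E, p <+: x → ¬ Monochromatic col p) ∨
      (∃ π : ℕ → E, InfFairSeq Pr π ∧
        ∀ k : ℕ, ¬ Monochromatic col (prefixList π k)) := by
    rcases isEmpty_or_nonempty E with hE | hE
    · left
      refine ⟨[], ⟨hnil, fun e => (hE.false e).elim⟩, ?_⟩
      intro q hq hm
      rw [List.prefix_nil.mp hq] at hm
      exact not_mono_of_poly col hpoly hm
    · obtain ⟨ν, hν⟩ := exists_cyclic E
      have step : ∀ x : List E, x ∈ Pr.runs → Polychromatic col x → ∀ e : E,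
          ∃ y, y ∈ Pr.runs ∧ x <+: y ∧ Polychromatic col y ∧
            (Pr.Enabled x e → (¬ Pr.Enabled y e ∨ ∃ y', x <+: y' ∧ y = y' ++ [e])) := by
        intro x hx hpx e
        by_cases he : Pr.Enabled x e
        · obtain ⟨y, h1, h2, h3, h4⟩ := extension_lemma hcol hsingle hres hx hpx he
          exact ⟨y, h1, h2, h3, fun _ => h4⟩
        · exact ⟨x, hx, List.prefix_rfl, hpx, fun h => absurd h he⟩
      choose F hF1 hF2 hF3 hF4 using step
      set X : ℕ → {x : List E // x ∈ Pr.runs ∧ Polychromatic col x} :=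
        fun n => Nat.rec
          (motive := fun _ => {x : List E // x ∈ Pr.runs ∧ Polychromatic col x})
          ⟨[], hnil, hpoly⟩
          (fun n ih => ⟨F ih.1 ih.2.1 ih.2.2 (ν n), hF1 _ _ _ _, hF3 _ _ _ _⟩) n
        with hX
      have hXmono : ∀ n, (X n).1 <+: (X (n+1)).1 := fun n => hF2 _ _ _ _
      have hXchain : ∀ m n, m ≤ n → (X m).1 <+: (X n).1 := by
        intro m n h
        induction n with
        | zero => rw [Nat.le_zero.mp h]
        | succ n ihn =>
          rcases Nat.lt_or_ge m (n+1) with h' | h'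
          · exact (ihn (Nat.lt_succ_iff.mp h')).trans (hXmono n)
          · rw [Nat.le_antisymm h h']
      have hXprop : ∀ n, Pr.Enabled (X n).1 (ν n) →
          (¬ Pr.Enabled (X (n+1)).1 (ν n) ∨
            ∃ y', (X n).1 <+: y' ∧ (X (n+1)).1 = y' ++ [ν n]) :=
        fun n => hF4 _ _ _ _
      by_cases hstab : ∃ n, ∀ m, n ≤ m → (X m).1 = (X n).1
      · left
        obtain ⟨n₀, hn₀⟩ := hstab
        refine ⟨(X n₀).1, ⟨(X n₀).2.1, ?_⟩, ?_⟩
        · intro e he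
          obtain ⟨k, hk, hνk⟩ := hν e n₀
          have hek : Pr.Enabled (X k).1 (ν k) := by
            rw [hνk, hn₀ k hk]; exact he
          rcases hXprop k hek with h | ⟨y', hy', heq⟩
          · apply h
            rw [hνk, hn₀ (k+1) (hk.trans (Nat.le_succ k))]
            exact he
          · have h1 : (X (k+1)).1 = (X k).1 := by
              rw [hn₀ (k+1) (hk.trans (Nat.le_succ k)), hn₀ k hk]
            rw [h1] at heq
            have h2 := hy'.length_le
            rw [heq] at h2
            simp at h2
        · intro q hq hm
          have hq' : q ∈ Pr.runs := Pr.prefix_closed _ _ hq (X n₀).2.1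
          exact not_mono_of_poly col
            (poly_of_prefix Pr col hcol hq' (X n₀).2.1 hq (X n₀).2.2) hm
      · right
        push_neg at hstab
        have hgrow : ∀ n, ∃ m, n ≤ m ∧ (X n).1.length < (X m).1.length := by
          intro n
          obtain ⟨m, hm, hne⟩ := hstab n
          refine ⟨m, hm, ?_⟩
          have hpre := hXchain n m hm
          rcases Nat.lt_or_ge (X n).1.length (X m).1.length with h | h
          · exact h
          · exact absurd (hpre.eq_of_length (Nat.le_antisymm hpre.length_le h)).symm hne
        have hunbdd : ∀ B, ∃ n, B ≤ (X n).1.length := by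
          intro B
          induction B with
          | zero => exact ⟨0, Nat.zero_le _⟩
          | succ B ihB =>
            obtain ⟨n, hn⟩ := ihB
            obtain ⟨m, _, hlt⟩ := hgrow n
            exact ⟨m, Nat.succ_le_of_lt (lt_of_le_of_lt hn hlt)⟩
        have hlen : ∀ k : ℕ, ∃ n, k < (X n).1.length := fun k => hunbdd (k + 1)
        choose φ hφ using hlen
        set π : ℕ → E := fun k => (X (φ k)).1[k]'(hφ k) with hπ
        have hcons : ∀ n k (h : k < (X n).1.length), (X n).1[k] = π k := by
          intro n k h
          rcases Nat.le_total n (φ k) with hle | hle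
          · exact (hXchain n (φ k) hle).getElem h
          · exact ((hXchain (φ k) n hle).getElem (hφ k)).symm
        have hpl : ∀ (k n : ℕ), k ≤ (X n).1.length → prefixList π k = (X n).1.take k := by
          intro k n h
          apply List.ext_getElem
          · simp [prefixList]
            omega
          · intro i h1 h2
            simp only [prefixList] at h1 ⊢
            rw [List.getElem_ofFn, List.getElem_take]
            exact (hcons n i (by simp at h2; omega)).symm
        have hplX : ∀ n, prefixList π ((X n).1.length) = (X n).1 := by
          intro n
          rw [hpl _ n le_rfl, List.take_length]
        refine ⟨π, ⟨?_, ?_⟩, ?_⟩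
        · intro k
          rw [hpl k (φ k) (le_of_lt (hφ k))]
          exact Pr.prefix_closed _ _ (List.take_prefix _ _) (X (φ k)).2.1
        · rintro e ⟨N, hN⟩ N'
          obtain ⟨n₀, hn₀⟩ := hunbdd (max N N')
          obtain ⟨n, hn, hνn⟩ := hν e n₀
          have hlen_n : max N N' ≤ (X n).1.length :=
            hn₀.trans (hXchain n₀ n hn).length_le
          have hen : Pr.Enabled (X n).1 (ν n) := by
            rw [hνn, ← hplX n]
            exact hN _ (le_trans (le_max_left _ _) hlen_n)
          rcases hXprop n hen with h | ⟨y', hy', heq⟩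
          · exfalso
            apply h
            rw [hνn, ← hplX (n+1)]
            exact hN _ (le_trans (le_trans (le_max_left _ _) hlen_n)
              (hXchain n (n+1) (Nat.le_succ n)).length_le)
          · refine ⟨y'.length, ?_, ?_⟩
            · exact le_trans (le_trans (le_max_right _ _) hlen_n) hy'.length_le
            · have h2 : y'.length < (X (n+1)).1.length := by
                rw [heq]; simp
              have h3 := hcons (n+1) y'.length h2
              have h4 : (X (n+1)).1[y'.length]'h2 = ν n :=
                (List.getElem_of_eq heq h2).trans (by simp)
              rw [← h3, h4, hνn]
        · intro k hm
          have h1 : prefixList π k ∈ Pr.runs := by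
            rw [hpl k (φ k) (le_of_lt (hφ k))]
            exact Pr.prefix_closed _ _ (List.take_prefix _ _) (X (φ k)).2.1
          have h2 : prefixList π k <+: (X (φ k)).1 := by
            rw [hpl k (φ k) (le_of_lt (hφ k))]
            exact List.take_prefix _ _
          exact not_mono_of_poly col
            (poly_of_prefix Pr col hcol h1 (X (φ k)).2.1 h2 (X (φ k)).2.2) hm
  refine ⟨main, ?_⟩
  rintro ⟨hfin, hinf⟩
  rcases main with ⟨x, hfair, hnm⟩ | ⟨π, hfair, hnm⟩
  · obtain ⟨q, hq, hmq⟩ := hfin x hfair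
    exact hnm q hq hmq
  · obtain ⟨k, hk⟩ := hinf π hfair
    exact hnm k hk
end
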